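/- Fix $1 < \sigma \le 2$. There exists a constant $c = c(\sigma) > 0$ such that for all real $x$ and all $\nu > 0$: if $|x| \le \nu$ then $|x+\nu|^\sigma + |x-\nu|^\sigma - 2|x|^\sigma \ge c\,\nu^\sigma$, and if $|x| > \nu$ then $|x+\nu|^\sigma + |x-\nu|^\sigma - 2|x|^\sigma \ge c\,\nu^2 |x|^{\sigma-2}$. -/

import Mathlib

open Real Set

lemma quad_bernoulli {σ : ℝ} (hσ1 : 1 < σ) (hσ2 : σ ≤ 2) {u : ℝ} (hu0 : 0 ≤ u) (hu1 : u ≤ 1) :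
    1 - σ*u + σ*(σ-1)/2*u^2 ≤ (1-u)^σ := by
  set F : ℝ → ℝ := fun t => (1-t)^σ - (1 - σ*t + σ*(σ-1)/2*t^2) with hFdef
  have hder : ∀ t : ℝ, HasDerivAt F (σ - σ*(σ-1)*t - σ*(1-t)^(σ-1)) t := by
    intro t
    have h1 : HasDerivAt (fun s : ℝ => 1 - s) (-1) t := (hasDerivAt_id t).const_sub 1
    have h2 : HasDerivAt (fun s : ℝ => s ^ σ) (σ * (1-t) ^ (σ-1)) (1-t) :=
      Real.hasDerivAt_rpow_const (Or.inr hσ1.le)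
    have h3 : HasDerivAt (fun s : ℝ => (1-s)^σ) (σ * (1-t)^(σ-1) * (-1)) t := h2.comp t h1
    have h4 : HasDerivAt (fun s : ℝ => 1 - σ*s + σ*(σ-1)/2*s^2)
        (0 - σ*1 + σ*(σ-1)/2*(↑2*t^1)) t :=
      (((hasDerivAt_const t (1:ℝ)).sub ((hasDerivAt_id t).const_mul σ)).add
        ((hasDerivAt_pow 2 t).const_mul (σ*(σ-1)/2)))
    have h5 := h3.sub h4
    refine h5.congr_deriv ?_
    ring
  have hmono : MonotoneOn F (Icc (0:ℝ) 1) := by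
    apply monotoneOn_of_deriv_nonneg (convex_Icc 0 1)
    · exact fun t _ => ((hder t).differentiableAt).continuousAt.continuousWithinAt
    · exact fun t _ => ((hder t).differentiableAt).differentiableWithinAt
    · intro t ht
      rw [interior_Icc] at ht
      rw [(hder t).deriv]
      have hb : (1-t)^(σ-1) ≤ 1 - (σ-1)*t := by
        have := rpow_one_add_le_one_add_mul_self (s := -t) (by linarith [ht.2])
          (p := σ-1) (by linarith) (by linarith)
        have e1 : (1:ℝ) + -t = 1 - t := by ring
        have e2 : (1:ℝ) + (σ-1)*(-t) = 1 - (σ-1)*t := by ring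
        rwa [e1, e2] at this
      have hσ0 : (0:ℝ) ≤ σ := by linarith
      have := mul_le_mul_of_nonneg_left hb hσ0
      nlinarith [this]
  have h0 : F 0 = 0 := by
    simp [hFdef]
  have hle := hmono (mem_Icc.mpr ⟨le_refl 0, zero_le_one⟩) (mem_Icc.mpr ⟨hu0, hu1⟩) hu0
  rw [h0] at hle
  have : 0 ≤ (1-u)^σ - (1 - σ*u + σ*(σ-1)/2*u^2) := hle
  linarith

lemma key_lower (σ : ℝ) (hσ1 : 1 < σ) (hσ2 : σ ≤ 2)
    (hqb : ∀ u : ℝ, 0 ≤ u → u ≤ 1 → 1 - σ*u + σ*(σ-1)/2*u^2 ≤ (1-u)^σ) :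
    ∃ c : ℝ, 0 < c ∧ ∀ y ν : ℝ, 0 ≤ y → 0 < ν →
      ((y ≤ ν → (y+ν)^σ + (ν-y)^σ - 2*y^σ ≥ c*ν^σ) ∧
       (ν < y → (y+ν)^σ + (y-ν)^σ - 2*y^σ ≥ c*ν^2*y^(σ-2))) := by
  have h2σ : (2:ℝ) < 2^σ := by
    calc (2:ℝ) = 2^(1:ℝ) := (Real.rpow_one 2).symm
    _ < 2^σ := Real.rpow_lt_rpow_of_exponent_lt one_lt_two hσ1
  have h2σ0 : (0:ℝ) < 2^σ := by linarith
  refine ⟨min ((2^σ-2)/2^σ) (min (1/2^σ) (σ*(σ-1)/2)), ?_, ?_⟩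
  · apply lt_min
    · exact div_pos (by linarith) h2σ0
    · apply lt_min
      · positivity
      · nlinarith
  set c := min ((2^σ-2)/2^σ) (min (1/2^σ) (σ*(σ-1)/2)) with hc
  have hc1 : c ≤ (2^σ-2)/2^σ := min_le_left _ _
  have hc2 : c ≤ 1/2^σ := le_trans (min_le_right _ _) (min_le_left _ _)
  have hc3 : c ≤ σ*(σ-1)/2 := le_trans (min_le_right _ _) (min_le_right _ _)
  intro y ν hy0 hν
  constructor
  · -- case 1 : y ≤ ν
    intro hyν
    have hup : 2^σ * y^σ ≤ (y+ν)^σ := by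
      calc 2^σ * y^σ = (2*y)^σ := (Real.mul_rpow (by norm_num) hy0).symm
      _ ≤ (y+ν)^σ := Real.rpow_le_rpow (by linarith) (by linarith) (by linarith)
    rcases le_or_gt (ν/2) y with hhalf | hhalf
    · have hyb : ν^σ/2^σ ≤ y^σ := by
        rw [← Real.div_rpow hν.le (by norm_num)]
        exact Real.rpow_le_rpow (by positivity) hhalf (by linarith)
      have hnn : (0:ℝ) ≤ (ν-y)^σ := Real.rpow_nonneg (by linarith) σ
      have hcν : c*ν^σ ≤ (2^σ-2)/2^σ * ν^σ :=
        mul_le_mul_of_nonneg_right hc1 (Real.rpow_nonneg hν.le σ)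
      have : (2^σ-2) * (ν^σ/2^σ) ≤ (2^σ-2) * y^σ :=
        mul_le_mul_of_nonneg_left hyb (by linarith)
      have e : (2^σ-2)/2^σ*ν^σ = (2^σ-2)*(ν^σ/2^σ) := by ring
      linarith [this, hup, hnn, hcν, e]
    · have hvy : ν^σ/2^σ ≤ (ν-y)^σ := by
        rw [← Real.div_rpow hν.le (by norm_num)]
        exact Real.rpow_le_rpow (by positivity) (by linarith) (by linarith)
      have hynn : (0:ℝ) ≤ y^σ := Real.rpow_nonneg hy0 σ
      have hcν : c*ν^σ ≤ 1/2^σ * ν^σ :=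
        mul_le_mul_of_nonneg_right hc2 (Real.rpow_nonneg hν.le σ)
      have e : (1:ℝ)/2^σ*ν^σ = ν^σ/2^σ := by ring
      have h22 : 0 ≤ (2^σ-2)*y^σ := mul_nonneg (by linarith) hynn
      linarith [hup, hvy, hcν, e, h22]
  · -- case 2 : ν < y
    intro hyν
    have hy : (0:ℝ) < y := lt_trans hν hyν
    set u := ν/y with hu
    have hu0 : 0 < u := div_pos hν hy
    have hu1 : u < 1 := (div_lt_one hy).mpr hyν
    have hplus : y^σ * (1 + σ*u) ≤ (y+ν)^σ := by
      have hb := one_add_mul_self_le_rpow_one_add (s := u) (by linarith) hσ1.le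
      calc y^σ * (1 + σ*u) ≤ y^σ * (1+u)^σ :=
            mul_le_mul_of_nonneg_left hb (Real.rpow_nonneg hy.le σ)
      _ = (y*(1+u))^σ := (Real.mul_rpow hy.le (by linarith)).symm
      _ = (y+ν)^σ := by rw [hu]; congr 1; field_simp
    have hminus : y^σ * (1 - σ*u + σ*(σ-1)/2*u^2) ≤ (y-ν)^σ := by
      have hb := hqb u hu0.le hu1.le
      calc y^σ * (1 - σ*u + σ*(σ-1)/2*u^2) ≤ y^σ * (1-u)^σ :=
            mul_le_mul_of_nonneg_left hb (Real.rpow_nonneg hy.le σ)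
      _ = (y*(1-u))^σ := (Real.mul_rpow hy.le (by linarith)).symm
      _ = (y-ν)^σ := by rw [hu]; congr 1; field_simp
    have hpow : y^σ * u^2 = ν^2 * y^(σ-2) := by
      have h1 : y^(σ-2) = y^σ / y^(2:ℕ) := by
        rw [Real.rpow_sub hy, show ((2:ℝ) = ((2:ℕ):ℝ)) by norm_num, Real.rpow_natCast]
      rw [h1, hu]
      field_simp
    have hfin : c*ν^2*y^(σ-2) ≤ σ*(σ-1)/2 * (y^σ * u^2) := by
      rw [hpow]
      have hnn : (0:ℝ) ≤ ν^2*y^(σ-2) := by positivity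
      nlinarith [mul_le_mul_of_nonneg_right hc3 hnn]
    nlinarith [hplus, hminus, hfin]

/-- Second-difference (discrete convexity) lower bound for `t ↦ |t|^σ`, `1 < σ ≤ 2`. -/
theorem second_difference_lower (σ : ℝ) (hσ1 : 1 < σ) (hσ2 : σ ≤ 2) :
    ∃ c : ℝ, 0 < c ∧ ∀ x ν : ℝ, 0 < ν →
      ((|x| ≤ ν → |x + ν| ^ σ + |x - ν| ^ σ - 2 * |x| ^ σ ≥ c * ν ^ σ) ∧
       (|x| > ν → |x + ν| ^ σ + |x - ν| ^ σ - 2 * |x| ^ σ ≥ c * ν ^ 2 * |x| ^ (σ - 2))) := by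
  obtain ⟨c, hc, hkey⟩ := key_lower σ hσ1 hσ2
    (fun u hu0 hu1 => quad_bernoulli hσ1 hσ2 hu0 hu1)
  refine ⟨c, hc, fun x ν hν => ?_⟩
  have habs : |x + ν| ^ σ + |x - ν| ^ σ = (|x| + ν) ^ σ + abs (|x| - ν) ^ σ := by
    rcases le_or_gt 0 x with hx | hx
    · rw [abs_of_nonneg hx, abs_of_nonneg (by linarith : (0:ℝ) ≤ x + ν)]
    · rw [abs_of_neg hx, abs_of_nonpos (by linarith : x - ν ≤ 0)]
      have e1 : x + ν = -(-x - ν) := by ring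
      rw [e1, abs_neg, show -(x - ν) = -x + ν by ring, add_comm]
  obtain ⟨H1, H2⟩ := hkey |x| ν (abs_nonneg x) hν
  constructor
  · intro h
    rw [habs, abs_of_nonpos (by linarith : |x| - ν ≤ 0), show -(|x| - ν) = ν - |x| by ring]
    exact H1 h
  · intro h
    rw [habs, abs_of_pos (by linarith : (0:ℝ) < |x| - ν)]
    exact H2 h
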